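/- Let n ≥ 2, e₁, …, eₙ the standard basis of ℝⁿ, Sᵢ = {eᵢ, 0} ∪ {eᵢ + 2e_j : j ≠ i} for i = 1, …, n, and Q̃ = conv(S₁ ∪ ⋯ ∪ Sₙ). Let F = (Q̃)_α be a face of Q̃ with nonzero inner normal α ∈ ℝⁿ. If there exist indices i ≠ j such that both eᵢ ∈ F and eᵢ + 2e_j ∈ F, then 0 ∈ F; consequently F intersects every Sₖ for k = 1, …, n. -/
import Mathlib


open MeasureTheory Pointwise

/-- `faceOf P α` is the face `(P)_α` of the set `P` with inner normal `α`. -/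
def faceOf {d : ℕ} (P : Set (EuclideanSpace ℝ (Fin d)))
    (α : EuclideanSpace ℝ (Fin d)) : Set (EuclideanSpace ℝ (Fin d)) :=
  {q ∈ P | ∀ p ∈ P, inner (𝕜 := ℝ) q α ≤ inner (𝕜 := ℝ) p α}

/-- The support `Sᵢ = {eᵢ, 0} ∪ {eᵢ + 2eⱼ : j ≠ i}` of the Noonburg neural-network
system. -/
noncomputable def noonS (n : ℕ) (i : Fin n) : Set (EuclideanSpace ℝ (Fin n)) :=
  {EuclideanSpace.single i 1, 0} ∪
    {x | ∃ j : Fin n, j ≠ i ∧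
      x = EuclideanSpace.single i 1 + (2 : ℝ) • EuclideanSpace.single j 1}

/-- If a face `F = (Q̃)_α` of `Q̃ = conv(S₁ ∪ ⋯ ∪ Sₙ)` (Noonburg supports) contains both
`eᵢ` and `eᵢ + 2eⱼ` for some `i ≠ j`, then `0 ∈ F`; consequently `F` intersects every
`Sₖ`. -/
theorem noonburg_face_case2 (n : ℕ) (hn : 2 ≤ n)
    (α : EuclideanSpace ℝ (Fin n)) (hα : α ≠ 0)
    (F : Set (EuclideanSpace ℝ (Fin n)))
    (hF : F = faceOf (convexHull ℝ (⋃ i, noonS n i)) α)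
    (i j : Fin n) (hij : i ≠ j)
    (h1 : EuclideanSpace.single i 1 ∈ F)
    (h2 : EuclideanSpace.single i 1 + (2 : ℝ) • EuclideanSpace.single j 1 ∈ F) :
    (0 : EuclideanSpace ℝ (Fin n)) ∈ F ∧ ∀ k : Fin n, (F ∩ noonS n k).Nonempty := by
  subst hF
  have hmem : ∀ (k : Fin n) (x : EuclideanSpace ℝ (Fin n)), x ∈ noonS n k →
      x ∈ convexHull ℝ (⋃ i, noonS n i) := fun k x hx =>
    subset_convexHull ℝ _ (Set.mem_iUnion.2 ⟨k, hx⟩)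
  obtain ⟨hei, hmin1⟩ := h1
  obtain ⟨heij, hmin2⟩ := h2
  have h0 : (0 : EuclideanSpace ℝ (Fin n)) ∈ convexHull ℝ (⋃ i, noonS n i) :=
    hmem i 0 (Or.inl (Or.inr rfl))
  have hji : EuclideanSpace.single j 1 + (2 : ℝ) • EuclideanSpace.single i 1 ∈
      convexHull ℝ (⋃ i, noonS n i) :=
    hmem j _ (Or.inr ⟨i, hij, rfl⟩)
  have A1 : inner (𝕜 := ℝ) (EuclideanSpace.single i 1) α = α i := by
    simp [EuclideanSpace.inner_single_left]
  have A2 : inner (𝕜 := ℝ)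
      (EuclideanSpace.single i 1 + (2 : ℝ) • EuclideanSpace.single j 1) α
      = α i + 2 * α j := by
    simp [inner_add_left, real_inner_smul_left, EuclideanSpace.inner_single_left]
  have A3 : inner (𝕜 := ℝ)
      (EuclideanSpace.single j 1 + (2 : ℝ) • EuclideanSpace.single i 1) α
      = α j + 2 * α i := by
    simp [inner_add_left, real_inner_smul_left, EuclideanSpace.inner_single_left]
  have A0 : inner (𝕜 := ℝ) (0 : EuclideanSpace ℝ (Fin n)) α = 0 := inner_zero_left α
  -- α j = 0
  have e1 : α i ≤ α i + 2 * α j := by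
    have := hmin1 _ heij; rw [A1, A2] at this; exact this
  have e2 : α i + 2 * α j ≤ α i := by
    have := hmin2 _ hei; rw [A1, A2] at this; exact this
  have hj0 : α j = 0 := by linarith
  have e3 : α i ≤ α j + 2 * α i := by
    have := hmin1 _ hji; rw [A1, A3] at this; exact this
  have e4 : α i ≤ 0 := by
    have := hmin1 _ h0; rw [A1, A0] at this; exact this
  have hi0 : α i = 0 := by linarith
  have hzeroF : (0 : EuclideanSpace ℝ (Fin n)) ∈
      faceOf (convexHull ℝ (⋃ i, noonS n i)) α := by
    refine ⟨h0, fun p hp => ?_⟩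
    have := hmin1 p hp
    rw [A1, hi0] at this
    rw [A0]
    exact this
  exact ⟨hzeroF, fun k => ⟨0, hzeroF, Or.inl (Or.inr rfl)⟩⟩
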